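/- Let C be a Grothendieck category and (U,θ,η) a monad on C whose underlying endofunctor U is exact and preserves colimits. Then the Eilenberg-Moore category EM_U of U-modules is a Grothendieck category, in which colimits and finite limits are computed on underlying objects in C. -/

import Mathlib

open CategoryTheory CategoryTheory.Limits Opposite

universe w v u u₂ v₂

namespace Paper

variable {C : Type u} [Category.{v} C]

/-- A partially ordered set `J` is `κ`-directed if every subset of cardinality `< κ`
has an upper bound. -/
def IsKappaDirected (κ : Cardinal.{v}) (J : Type v) [Preorder J] : Prop :=
  ∀ S : Set J, Cardinal.mk S < κ → ∃ j : J, ∀ s ∈ S, s ≤ j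

/-- An object `M` is `κ`-presentable if `C(M,-)` preserves colimits of
`κ`-directed diagrams. -/
def IsPresentable (κ : Cardinal.{v}) (M : C) : Prop :=
  ∀ (J : Type v) [PartialOrder J], IsKappaDirected κ J →
    PreservesColimitsOfShape J (coyoneda.obj (op M))

/-- A category is locally `κ`-presentable if it is cocomplete and has a small
separating family of `κ`-presentable objects. -/
def IsLocallyKappaPresentable (κ : Cardinal.{v₂}) (A : Type u₂) [Category.{v₂} A] : Prop :=
  ∃ (_ : HasColimits A) (S : Set A), Small.{v₂} S ∧ (∀ M ∈ S, IsPresentable κ M) ∧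
    ObjectProperty.IsSeparating (S : ObjectProperty A)

/-- A category is locally presentable if it is locally `κ`-presentable for some
regular cardinal `κ`. -/
def IsLocallyPresentable (A : Type u₂) [Category.{v₂} A] : Prop :=
  ∃ κ : Cardinal.{v₂}, κ.IsRegular ∧ IsLocallyKappaPresentable κ A

/-- Filtered colimits exist when all colimits do. -/
def hasFilteredOfHasColimits {A : Type u₂} [Category.{v₂} A] (hc : HasColimits A) :
    HasFilteredColimits A :=
  ⟨fun I _ _ => hc.has_colimits_of_shape I⟩

/-- A Grothendieck category: abelian, cocomplete, AB5, with a generator. -/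
def IsGrothendieckCategory (A : Type u₂) [Category.{v₂} A] : Prop :=
  ∃ (_ : Abelian A) (hc : HasColimits A),
    @AB5 A _ (hasFilteredOfHasColimits hc) ∧ ∃ G : A, IsSeparator G

section MonadQuiver

variable {Q : Type v} [SmallCategory Q] (𝒰 : Q ⥤ Monad C)

/-- A module over a monad quiver `𝒰 : Q ⥤ Mnd(C)`: a family of Eilenberg-Moore
algebras `pt x ∈ EM_{𝒰 x}` together with compatible structure morphisms
`pt x ⟶ (𝒰 φ)_* (pt y)` for each arrow `φ : x ⟶ y`. -/
structure UMod where
  pt : ∀ x : Q, (𝒰.obj x).Algebra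
  tr : ∀ {x y : Q}, (x ⟶ y) → ((pt x).A ⟶ (pt y).A)
  compat : ∀ {x y : Q} (φ : x ⟶ y),
    (𝒰.obj x).toFunctor.map (tr φ) ≫ ((𝒰.map φ).app (pt y).A ≫ (pt y).a) =
      (pt x).a ≫ tr φ
  tr_id : ∀ x : Q, tr (𝟙 x) = 𝟙 (pt x).A
  tr_comp : ∀ {x y z : Q} (φ : x ⟶ y) (ψ : y ⟶ z), tr (φ ≫ ψ) = tr φ ≫ tr ψ

variable {𝒰}

/-- Morphisms of modules over a monad quiver. -/
structure UModHom (M N : UMod 𝒰) where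
  app : ∀ x : Q, (M.pt x).A ⟶ (N.pt x).A
  halg : ∀ x : Q,
    (𝒰.obj x).toFunctor.map (app x) ≫ (N.pt x).a = (M.pt x).a ≫ app x
  hcomm : ∀ {x y : Q} (φ : x ⟶ y), M.tr φ ≫ app y = app x ≫ N.tr φ

theorem UModHom.ext' {M N : UMod 𝒰} {f g : UModHom M N} (h : f.app = g.app) : f = g := by
  cases f; cases g; cases h; rfl

instance : Category (UMod 𝒰) where
  Hom := UModHom
  id M :=
    { app := fun x => 𝟙 _
      halg := fun x => by simp
      hcomm := fun φ => by simp }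
  comp {M N P} f g :=
    { app := fun x => f.app x ≫ g.app x
      halg := fun x => by
        rw [Functor.map_comp, Category.assoc, g.halg x, ← Category.assoc, f.halg x,
          Category.assoc]
      hcomm := fun φ => by
        rw [← Category.assoc, f.hcomm φ, Category.assoc, g.hcomm φ, ← Category.assoc] }
  id_comp f := UModHom.ext' (by funext x; exact Category.id_comp _)
  comp_id f := UModHom.ext' (by funext x; exact Category.comp_id _)
  assoc f g h := UModHom.ext' (by funext x; exact Category.assoc _ _ _)

variable (𝒰)

/-- Evaluation of a `𝒰`-module at a vertex `x`. -/
def ev (x : Q) : UMod 𝒰 ⥤ (𝒰.obj x).Algebra where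
  obj M := M.pt x
  map f := { f := f.app x, h := f.halg x }
  map_id _ := rfl
  map_comp _ _ := rfl

variable {𝒰}

/-- The structure morphism of a module, as a morphism `pt x ⟶ φ_* (pt y)` of
Eilenberg-Moore algebras. -/
def UMod.trHom (M : UMod 𝒰) {x y : Q} (φ : x ⟶ y) :
    M.pt x ⟶ (Monad.algebraFunctorOfMonadHom (𝒰.map φ)).obj (M.pt y) :=
  { f := M.tr φ
    h := M.compat φ }

/-- `M` is cartesian at the edge `φ : x ⟶ y` if the structure morphism
`pt x ⟶ φ_* (pt y)` is a universal arrow; equivalently the adjoint transpose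
`φ^* (pt x) ⟶ pt y` is an isomorphism. -/
def IsCartesianAt (M : UMod 𝒰) {x y : Q} (φ : x ⟶ y) : Prop :=
  ∀ (N : (𝒰.obj y).Algebra) (g : M.pt x ⟶ (Monad.algebraFunctorOfMonadHom (𝒰.map φ)).obj N),
    ∃! h : M.pt y ⟶ N,
      M.trHom φ ≫ (Monad.algebraFunctorOfMonadHom (𝒰.map φ)).map h = g

end MonadQuiver

/-- `P` together with `η : M ⟶ φ_* P` is a reflection of `M` along restriction of
scalars, i.e. `η` exhibits `P` as `φ^* M`. -/
def IsExtension {T₁ T₂ : Monad C} (φ : T₁ ⟶ T₂) (M : T₁.Algebra) (P : T₂.Algebra)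
    (η : M ⟶ (Monad.algebraFunctorOfMonadHom φ).obj P) : Prop :=
  ∀ (N : T₂.Algebra) (g : M ⟶ (Monad.algebraFunctorOfMonadHom φ).obj N),
    ∃! h : P ⟶ N, η ≫ (Monad.algebraFunctorOfMonadHom φ).map h = g

/-- A monad morphism `φ` is flat if the left adjoint `φ^*` of the restriction
functor `φ_*` is exact. -/
def IsFlatMonadHom {T₁ T₂ : Monad C} (φ : T₁ ⟶ T₂) : Prop :=
  ∀ (L : T₁.Algebra ⥤ T₂.Algebra),
    Nonempty (L ⊣ Monad.algebraFunctorOfMonadHom φ) → PreservesFiniteLimits L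

section AbelianAux

variable {A : Type u₂} [Category.{v₂} A] {B : Type u} [Category.{v} B]
  [HasZeroMorphisms A] [HasKernels A] [HasCokernels A]
  [HasZeroMorphisms B] [HasKernels B] [HasCokernels B]
  (F : A ⥤ B) [F.PreservesZeroMorphisms]

/-- If `F` is a kernel- and cokernel-preserving functor which reflects isomorphisms, and the
coimage-image comparison of `F.map f` is an isomorphism, then so is that of `f`. -/
theorem isIso_coimageImageComparison_of_reflects
    {X Y : A} (f : X ⟶ Y)
    [PreservesLimit (parallelPair f 0) F]
    [PreservesColimit (parallelPair f 0) F]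
    [PreservesColimit (parallelPair (kernel.ι f) 0) F]
    [PreservesLimit (parallelPair (cokernel.π f) 0) F]
    [IsIso (Abelian.coimageImageComparison (F.map f))]
    [F.ReflectsIsomorphisms] :
    IsIso (Abelian.coimageImageComparison f) := by
  let cIso : F.obj (Abelian.coimage f) ≅ Abelian.coimage (F.map f) :=
    PreservesCokernel.iso F _ ≪≫
      cokernel.mapIso _ _ (PreservesKernel.iso F f) (Iso.refl _)
        (by simp [PreservesKernel.iso_hom])
  let iIso : F.obj (Abelian.image f) ≅ Abelian.image (F.map f) :=
    PreservesKernel.iso F _ ≪≫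
      kernel.mapIso _ _ (Iso.refl _) (PreservesCokernel.iso F f)
        (by rw [← Iso.eq_comp_inv, PreservesCokernel.iso_inv]; simp)
  have h1 : F.map (cokernel.π (kernel.ι f)) ≫ (PreservesCokernel.iso F (kernel.ι f)).hom =
      cokernel.π (F.map (kernel.ι f)) := by
    rw [← Iso.eq_comp_inv, PreservesCokernel.iso_inv, π_comp_cokernelComparison]
  have fact1 : F.map (Abelian.coimage.π f) ≫ cIso.hom = Abelian.coimage.π (F.map f) := by
    dsimp only [cIso, Iso.trans_hom]
    rw [← Category.assoc, h1]
    simp [cokernel.mapIso]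
  have fact2 : iIso.hom ≫ Abelian.image.ι (F.map f) = F.map (Abelian.image.ι f) := by
    dsimp only [iIso, Iso.trans_hom]
    simp [kernel.mapIso, PreservesKernel.iso_hom]
  have key : Abelian.coimageImageComparison (F.map f) =
      cIso.inv ≫ F.map (Abelian.coimageImageComparison f) ≫ iIso.hom := by
    rw [← cancel_epi (Abelian.coimage.π (F.map f)), ← cancel_mono (Abelian.image.ι (F.map f))]
    simp only [Category.assoc, Abelian.coimage_image_factorisation]
    rw [← fact1]
    simp only [Category.assoc, Iso.hom_inv_id_assoc, fact2]
    rw [← F.map_comp, ← F.map_comp, Abelian.coimage_image_factorisation]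
  have hmap : F.map (Abelian.coimageImageComparison f) =
      cIso.hom ≫ Abelian.coimageImageComparison (F.map f) ≫ iIso.inv := by
    rw [key]; simp
  have : IsIso (F.map (Abelian.coimageImageComparison f)) := by
    rw [hmap]; infer_instance
  exact isIso_of_reflects_iso _ F

end AbelianAux

/-- the Eilenberg-Moore category of an exact colimit-preserving monad
on a Grothendieck category is Grothendieck, with colimits and finite limits computed
on underlying objects (Proposition 3.1). -/
theorem em_isGrothendieck {C : Type u} [Category.{v} C] [Abelian C] [HasColimits C] [AB5 C]
    (G : C) (hG : IsSeparator G) (T : Monad C)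
    [PreservesFiniteLimits T.toFunctor] [PreservesColimits T.toFunctor] :
    IsGrothendieckCategory T.Algebra ∧
      PreservesColimits T.forget ∧ PreservesFiniteLimits T.forget := by
  -- basic structure on C and T
  haveI : T.toFunctor.Additive := Functor.additive_of_preserves_binary_products _
  -- limits and colimits in the Eilenberg-Moore category
  haveI : HasFiniteLimits T.Algebra :=
    ⟨fun J _ _ => hasLimitsOfShape_of_hasLimitsOfShape_createsLimitsOfShape T.forget⟩
  haveI hc : HasColimits T.Algebra := hasColimits_of_hasColimits_createsColimits T.forget
  -- the forgetful functor is exact and preserves colimits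
  haveI hpc : PreservesColimits T.forget := inferInstance
  haveI hpl : PreservesFiniteLimits T.forget := ⟨fun J _ _ => inferInstance⟩
  haveI : PreservesFiniteColimits T.forget := ⟨fun J _ _ => inferInstance⟩
  -- abelian structure
  haveI : ∀ {X Y : T.Algebra} (f : X ⟶ Y), IsIso (Abelian.coimageImageComparison f) :=
    fun f => isIso_coimageImageComparison_of_reflects T.forget f
  haveI habel : Abelian T.Algebra := Abelian.ofCoimageImageComparisonIsIso
  -- AB5
  have ab5 : @AB5 T.Algebra _ (hasFilteredOfHasColimits hc) := by
    constructor
    intro J _ _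
    haveI : PreservesFiniteLimits ((Functor.whiskeringRight J T.Algebra C).obj T.forget) :=
      ⟨fun K _ _ => inferInstance⟩
    haveI : PreservesFiniteLimits
        ((Functor.whiskeringRight J T.Algebra C).obj T.forget ⋙ colim) :=
      comp_preservesFiniteLimits _ _
    haveI : PreservesFiniteLimits (colim (J := J) (C := T.Algebra) ⋙ T.forget) :=
      preservesFiniteLimits_of_natIso (preservesColimitNatIso T.forget).symm
    exact ⟨preservesFiniteLimits_of_reflects_of_preserves (colim (J := J) (C := T.Algebra)) T.forget⟩
  -- the free algebra on a separator is a separator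
  have hsep : IsSeparator (T.free.obj G) := by
    rw [isSeparator_def]
    intro X Y f g h
    ext1
    refine hG.def _ _ fun u => ?_
    have key : ∀ (k : X ⟶ Y), u ≫ k.f =
        (T.adj.homEquiv G Y) ((T.adj.homEquiv G X).symm u ≫ k) := by
      intro k
      erw [Adjunction.homEquiv_naturality_right, Equiv.apply_symm_apply]
      rfl
    rw [key f, key g, h ((T.adj.homEquiv G X).symm u)]
  exact ⟨⟨habel, hc, ab5, T.free.obj G, hsep⟩, hpc, hpl⟩

end Paper
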